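/- For every integer m ≥ 3 one has δ_1(1, m+1) ≤ δ_1(1, m); that is, the sequence (δ_1(1,m))_{m ≥ 3} of densities of the set of positive integers with exactly one non-trivial divisor strictly below m is non-increasing (and in particular unimodal). -/

import Mathlib

/-- `Llcm n m` is the least common multiple of the integers strictly between `n` and `m`,
i.e. of `{n+1, ..., m-1}`. -/
def Llcm (n m : ℕ) : ℕ := (Finset.Ioo n m).lcm id

/-- `delta r n m` is the density `δ_r(n,m)` of positive integers with exactly `r`
divisors in the open interval `(n, m)`: the proportion of `x ∈ {1, ..., Llcm n m}`
having exactly `r` divisors `d` with `n < d < m`. -/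
def delta (r n m : ℕ) : ℚ :=
  (((Finset.Icc 1 (Llcm n m)).filter
      (fun x => ((Finset.Ioo n m).filter (fun d => d ∣ x)).card = r)).card : ℚ) /
    (Llcm n m : ℚ)

open Finset

/-- Periodicity transfer: if `P` has period `L` then it has period `j*L`. -/
lemma shift_iff (P : ℕ → Prop) (L : ℕ)
    (hP : ∀ x, P (x + L) ↔ P x) : ∀ j x, P (x + j * L) ↔ P x := by
  intro j
  induction j with
  | zero => simp
  | succ j ih =>
    intro x
    have h : x + (j + 1) * L = (x + j * L) + L := by ring
    rw [h, hP, ih]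

/-- Counting a periodic predicate over `k` periods. -/
lemma count_periodic (P : ℕ → Prop) [DecidablePred P] (L : ℕ)
    (hP : ∀ x, P (x + L) ↔ P x) (k : ℕ) :
    ((Finset.Icc 1 (k * L)).filter P).card = k * ((Finset.Icc 1 L).filter P).card := by
  induction k with
  | zero => simp
  | succ k ih =>
    have hmul : (k + 1) * L = k * L + L := by ring
    rw [hmul]
    have hs : Finset.Icc 1 (k * L + L) =
        Finset.Icc 1 (k * L) ∪ Finset.Icc (k * L + 1) (k * L + L) := by
      ext x; simp only [Finset.mem_Icc, Finset.mem_union]; omega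
    have hdisj : Disjoint ((Finset.Icc 1 (k * L)).filter P)
        ((Finset.Icc (k * L + 1) (k * L + L)).filter P) := by
      apply Finset.disjoint_filter_filter
      rw [Finset.disjoint_left]
      intro a ha hb
      simp only [Finset.mem_Icc] at ha hb; omega
    rw [hs, Finset.filter_union, Finset.card_union_of_disjoint hdisj, ih]
    have himg : (Finset.Icc (k * L + 1) (k * L + L)).filter P
        = ((Finset.Icc 1 L).filter P).image (fun y => y + k * L) := by
      ext x
      simp only [Finset.mem_filter, Finset.mem_Icc, Finset.mem_image]
      constructor
      · rintro ⟨⟨h1, h2⟩, hx⟩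
        refine ⟨x - k * L, ⟨⟨by omega, by omega⟩, ?_⟩, by omega⟩
        have h3 := shift_iff P L hP k (x - k * L)
        rw [show x - k * L + k * L = x by omega] at h3
        exact h3.mp hx
      · rintro ⟨y, ⟨⟨hy1, hy2⟩, hy⟩, rfl⟩
        exact ⟨⟨by omega, by omega⟩, (shift_iff P L hP k y).mpr hy⟩
    rw [himg, Finset.card_image_of_injective _ (add_left_injective _)]
    ring

/-- The set of divisors of `x` in `(1,m)` only depends on `x` modulo a common multiple. -/
lemma filter_dvd_shift (m K x : ℕ) (hK : ∀ d ∈ Finset.Ioo 1 m, d ∣ K) :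
    (Finset.Ioo 1 m).filter (fun d => d ∣ x + K)
      = (Finset.Ioo 1 m).filter (fun d => d ∣ x) := by
  apply Finset.filter_congr
  intro d hd
  have hdK := hK d hd
  constructor
  · intro h
    have h2 := Nat.dvd_sub h hdK
    simpa using h2
  · intro h
    exact dvd_add h hdK

/-- A prime dividing a finset lcm divides some element. -/
lemma prime_dvd_lcm {s : Finset ℕ} {q : ℕ} (hq : q.Prime) (h : q ∣ s.lcm id) :
    ∃ d ∈ s, q ∣ d := by
  induction s using Finset.induction_on with
  | empty =>
    rw [Finset.lcm_empty] at h
    exact absurd (Nat.dvd_one.mp h) hq.ne_one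
  | @insert a s ha ih =>
    rw [Finset.lcm_insert] at h
    have h2 : q ∣ a * s.lcm id := h.trans (lcm_dvd (dvd_mul_right _ _) (dvd_mul_left _ _))
    rcases (Nat.Prime.dvd_mul hq).mp h2 with h1 | h1
    · exact ⟨a, Finset.mem_insert_self _ _, h1⟩
    · obtain ⟨d, hd, hqd⟩ := ih h1
      exact ⟨d, Finset.mem_insert_of_mem hd, hqd⟩

/-- Counting integers in `[1,N]` coprime to `N` gives the totient. -/
lemma coprime_Icc_card (N : ℕ) (hN : 1 ≤ N) :
    ((Finset.Icc 1 N).filter (fun v => Nat.Coprime v N)).card = N.totient := by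
  rcases eq_or_lt_of_le hN with h1 | h2
  · rw [← h1]; decide
  · rw [Nat.totient_eq_card_coprime]
    congr 1
    ext x
    simp only [Finset.mem_filter, Finset.mem_Icc, Finset.mem_range]
    constructor
    · rintro ⟨⟨hx1, hx2⟩, hc⟩
      have hxN : x ≠ N := by
        intro hx
        subst hx
        rw [Nat.Coprime, Nat.gcd_self] at hc
        omega
      exact ⟨by omega, hc.symm⟩
    · rintro ⟨hx, hc⟩
      have hx0 : x ≠ 0 := by
        rintro rfl
        have : N = 1 := by simpa using hc
        omega
      exact ⟨⟨by omega, by omega⟩, hc.symm⟩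

/-- Totient inequality: `φ(L) ≤ p * φ(L/p)` for a prime `p ∣ L`. -/
lemma totient_le_mul_div {p L : ℕ} (hp : p.Prime) (hpL : p ∣ L) :
    L.totient ≤ p * (L / p).totient := by
  by_cases h : p ∣ L / p
  · have h2 := Nat.totient_mul_of_prime_of_dvd hp h
    rw [Nat.mul_div_cancel' hpL] at h2
    omega
  · have hco : Nat.Coprime p (L / p) := (Nat.Prime.coprime_iff_not_dvd hp).mpr h
    have h2 := Nat.totient_mul hco
    rw [Nat.mul_div_cancel' hpL, Nat.totient_prime hp] at h2
    have : (p - 1) * (L / p).totient ≤ p * (L / p).totient :=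
      Nat.mul_le_mul_right _ (by omega)
    omega

/-- If `v` is coprime to `L/p`, then the only divisor of `p*v` in `(1,m)` is `p`. -/
lemma filter_eq_singleton {m p L v : ℕ} (hp : p.Prime) (hpm : p ∈ Finset.Ioo 1 m)
    (hL : ∀ d ∈ Finset.Ioo 1 m, d ∣ L) (hv : Nat.Coprime v (L / p)) :
    (Finset.Ioo 1 m).filter (fun d => d ∣ p * v) = {p} := by
  have hpL : p ∣ L := hL p hpm
  rw [Finset.eq_singleton_iff_unique_mem]
  constructor
  · exact Finset.mem_filter.mpr ⟨hpm, dvd_mul_right _ _⟩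
  · intro d hd
    simp only [Finset.mem_filter, Finset.mem_Ioo] at hd
    obtain ⟨⟨hd1, hd2⟩, hdvd⟩ := hd
    -- every prime factor of d equals p
    have hq : ∀ q : ℕ, q.Prime → q ∣ d → q = p := by
      intro q hqp hqd
      by_contra hne
      have hqpv : q ∣ p * v := hqd.trans hdvd
      have hcoqp : Nat.Coprime q p := (Nat.coprime_primes hqp hp).mpr hne
      have hqv : q ∣ v := hcoqp.dvd_mul_left.mp hqpv
      have hqm : q ∈ Finset.Ioo 1 m := by
        simp only [Finset.mem_Ioo]
        have hqled : q ≤ d := Nat.le_of_dvd (by omega) hqd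
        exact ⟨hqp.one_lt, lt_of_le_of_lt hqled hd2⟩
      have hqL : q ∣ L := hL q hqm
      have hqLp : q ∣ L / p := by
        have h2 : q ∣ p * (L / p) := by rw [Nat.mul_div_cancel' hpL]; exact hqL
        exact hcoqp.dvd_mul_left.mp h2
      have h3 : q ∣ 1 := hv ▸ Nat.dvd_gcd hqv hqLp
      have h1q := hqp.one_lt
      exact absurd (Nat.le_of_dvd one_pos h3) (by omega)
    have hpd : p ∣ d := by
      have h4 := hq d.minFac (Nat.minFac_prime (by omega)) (Nat.minFac_dvd d)
      rw [← h4]; exact Nat.minFac_dvd d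
    by_contra hne
    obtain ⟨e, rfl⟩ := hpd
    have hppos : 0 < p := hp.pos
    have he1 : 1 < e := by
      rcases Nat.lt_or_ge e 2 with h | h
      · interval_cases e
        · omega
        · simp at hne
      · omega
    have hqe : e.minFac = p :=
      hq e.minFac (Nat.minFac_prime (by omega)) (dvd_mul_of_dvd_right (Nat.minFac_dvd e) p)
    have hp2d : p * p ∣ p * e := mul_dvd_mul_left p (hqe ▸ Nat.minFac_dvd e)
    have hp2m : p * p < m :=
      lt_of_le_of_lt (Nat.le_of_dvd (Nat.mul_pos hppos (by omega)) hp2d) hd2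
    have hplp : p ∣ L / p := by
      have h4 : p * p ∣ L := hL (p * p) (by
        simp only [Finset.mem_Ioo]
        exact ⟨by nlinarith [hp.two_le], hp2m⟩)
      obtain ⟨t, ht⟩ := h4
      rw [ht, mul_assoc, Nat.mul_div_cancel_left _ hppos]
      exact dvd_mul_right _ _
    have hpv : p ∣ v := by
      have h5 : p * p ∣ p * v := hp2d.trans hdvd
      exact (mul_dvd_mul_iff_left (by omega : p ≠ 0)).mp h5
    have h6 : p ∣ 1 := hv ▸ Nat.dvd_gcd hpv hplp
    have h1p := hp.one_lt
    exact absurd (Nat.le_of_dvd one_pos h6) (by omega)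

/-- Core inequality: for `m` prime with `m > 5`, among `x ∈ [1, lcm(2..m-1)]` there are at
least as many with exactly one divisor in `(1,m)` as with none. -/
lemma core_ineq (m : ℕ) (hp : m.Prime) (hm : 5 < m) :
    ((Finset.Icc 1 (Llcm 1 m)).filter
        (fun u => ((Finset.Ioo 1 m).filter (fun d => d ∣ u)).card = 0)).card ≤
      ((Finset.Icc 1 (Llcm 1 m)).filter
        (fun u => ((Finset.Ioo 1 m).filter (fun d => d ∣ u)).card = 1)).card := by
  set L := Llcm 1 m with hLdef
  have hdL : ∀ d ∈ Finset.Ioo 1 m, d ∣ L := fun d hd => Finset.dvd_lcm hd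
  have hLpos : 0 < L := by
    rcases Nat.eq_zero_or_pos L with h | h
    · exfalso
      have h0 : (Finset.Ioo 1 m).lcm id = 0 := h
      rw [Finset.lcm_eq_zero_iff] at h0
      simp only [Set.mem_image, Finset.mem_coe, Finset.mem_Ioo, id_eq] at h0
      obtain ⟨d, ⟨hd1, _⟩, hd0⟩ := h0
      omega
    · exact h
  -- Step 1: the zero-divisor count is at most φ(L)
  have hZ : ((Finset.Icc 1 L).filter
      (fun u => ((Finset.Ioo 1 m).filter (fun d => d ∣ u)).card = 0)).card ≤ L.totient := by
    rw [← coprime_Icc_card L hLpos]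
    apply Finset.card_le_card
    intro u hu
    simp only [Finset.mem_filter, Finset.card_eq_zero] at hu ⊢
    obtain ⟨huI, hufil⟩ := hu
    refine ⟨huI, ?_⟩
    by_contra hnc
    obtain ⟨q, hqp, hqg⟩ := Nat.exists_prime_and_dvd hnc
    have hqu : q ∣ u := hqg.trans (Nat.gcd_dvd_left _ _)
    have hqL : q ∣ L := hqg.trans (Nat.gcd_dvd_right _ _)
    obtain ⟨d, hd, hqd⟩ := prime_dvd_lcm hqp hqL
    simp only [Finset.mem_Ioo] at hd
    have hqm : q ∈ Finset.Ioo 1 m := by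
      simp only [Finset.mem_Ioo]
      have : q ≤ d := Nat.le_of_dvd (by omega) hqd
      exact ⟨hqp.one_lt, by omega⟩
    have : q ∈ (Finset.Ioo 1 m).filter (fun d => d ∣ u) :=
      Finset.mem_filter.mpr ⟨hqm, hqu⟩
    rw [hufil] at this
    simp at this
  -- Step 2: for each prime p < m, there are at least φ(L/p) elements whose
  -- unique divisor in (1,m) is p.
  have hA : ∀ p : ℕ, p.Prime → p < m →
      (L / p).totient ≤ ((Finset.Icc 1 L).filter
        (fun u => (Finset.Ioo 1 m).filter (fun d => d ∣ u) = {p})).card := by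
    intro p hpp hpm
    have hpmem : p ∈ Finset.Ioo 1 m := by
      simp only [Finset.mem_Ioo]; exact ⟨hpp.one_lt, hpm⟩
    have hpL : p ∣ L := hdL p hpmem
    have hLppos : 1 ≤ L / p := Nat.one_le_div_iff hpp.pos |>.mpr (Nat.le_of_dvd hLpos hpL)
    rw [← coprime_Icc_card (L / p) hLppos]
    have himg : ((Finset.Icc 1 (L / p)).filter (fun v => Nat.Coprime v (L / p))).image
          (fun v => p * v) ⊆
        (Finset.Icc 1 L).filter
          (fun u => (Finset.Ioo 1 m).filter (fun d => d ∣ u) = {p}) := by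
      intro x hx
      simp only [Finset.mem_image, Finset.mem_filter, Finset.mem_Icc] at hx
      obtain ⟨v, ⟨⟨hv1, hv2⟩, hvc⟩, rfl⟩ := hx
      refine Finset.mem_filter.mpr ⟨?_, filter_eq_singleton hpp hpmem hdL hvc⟩
      simp only [Finset.mem_Icc]
      constructor
      · have := hpp.pos; nlinarith
      · calc p * v ≤ p * (L / p) := Nat.mul_le_mul_left _ hv2
          _ = L := Nat.mul_div_cancel' hpL
    calc ((Finset.Icc 1 (L / p)).filter (fun v => Nat.Coprime v (L / p))).card
        = (((Finset.Icc 1 (L / p)).filter (fun v => Nat.Coprime v (L / p))).image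
            (fun v => p * v)).card := by
          rw [Finset.card_image_of_injective _ (mul_right_injective₀ hpp.ne_zero)]
      _ ≤ _ := Finset.card_le_card himg
  -- Step 3: combine primes 2, 3, 5
  have h2 := hA 2 Nat.prime_two (by omega)
  have h3 := hA 3 Nat.prime_three (by omega)
  have h5 := hA 5 (by norm_num) (by omega)
  have hsub : ((Finset.Icc 1 L).filter
        (fun u => (Finset.Ioo 1 m).filter (fun d => d ∣ u) = {2})) ∪
      ((Finset.Icc 1 L).filter
        (fun u => (Finset.Ioo 1 m).filter (fun d => d ∣ u) = {3})) ∪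
      ((Finset.Icc 1 L).filter
        (fun u => (Finset.Ioo 1 m).filter (fun d => d ∣ u) = {5})) ⊆
      (Finset.Icc 1 L).filter
        (fun u => ((Finset.Ioo 1 m).filter (fun d => d ∣ u)).card = 1) := by
    intro u hu
    simp only [Finset.mem_union, Finset.mem_filter] at hu ⊢
    rcases hu with (⟨h1, h2'⟩ | ⟨h1, h2'⟩) | ⟨h1, h2'⟩ <;> exact ⟨h1, by rw [h2']; rfl⟩
  have hd23 : Disjoint ((Finset.Icc 1 L).filter
        (fun u => (Finset.Ioo 1 m).filter (fun d => d ∣ u) = {2}))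
      ((Finset.Icc 1 L).filter
        (fun u => (Finset.Ioo 1 m).filter (fun d => d ∣ u) = {3})) := by
    rw [Finset.disjoint_left]
    intro u hu hv
    simp only [Finset.mem_filter] at hu hv
    have := hu.2 ▸ hv.2
    simp [Finset.singleton_inj] at this
  have hd235 : Disjoint (((Finset.Icc 1 L).filter
        (fun u => (Finset.Ioo 1 m).filter (fun d => d ∣ u) = {2})) ∪
      ((Finset.Icc 1 L).filter
        (fun u => (Finset.Ioo 1 m).filter (fun d => d ∣ u) = {3})))
      ((Finset.Icc 1 L).filter
        (fun u => (Finset.Ioo 1 m).filter (fun d => d ∣ u) = {5})) := by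
    rw [Finset.disjoint_left]
    intro u hu hv
    simp only [Finset.mem_union, Finset.mem_filter] at hu hv
    rcases hu with ⟨_, h⟩ | ⟨_, h⟩ <;>
    · have := h ▸ hv.2
      simp [Finset.singleton_inj] at this
  have hcards : (L / 2).totient + (L / 3).totient + (L / 5).totient ≤
      ((Finset.Icc 1 L).filter
        (fun u => ((Finset.Ioo 1 m).filter (fun d => d ∣ u)).card = 1)).card := by
    calc (L / 2).totient + (L / 3).totient + (L / 5).totient
        ≤ ((Finset.Icc 1 L).filter
            (fun u => (Finset.Ioo 1 m).filter (fun d => d ∣ u) = {2})).card +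
          ((Finset.Icc 1 L).filter
            (fun u => (Finset.Ioo 1 m).filter (fun d => d ∣ u) = {3})).card +
          ((Finset.Icc 1 L).filter
            (fun u => (Finset.Ioo 1 m).filter (fun d => d ∣ u) = {5})).card := by omega
      _ = _ := by rw [← Finset.card_union_of_disjoint hd23,
            ← Finset.card_union_of_disjoint hd235]
      _ ≤ _ := Finset.card_le_card hsub
  -- totient inequalities
  have ht2 := totient_le_mul_div Nat.prime_two (hdL 2 (by simp only [Finset.mem_Ioo]; omega))
  have ht3 := totient_le_mul_div Nat.prime_three (hdL 3 (by simp only [Finset.mem_Ioo]; omega))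
  have ht5 := totient_le_mul_div (p := 5) (by norm_num)
    (hdL 5 (by simp only [Finset.mem_Ioo]; omega))
  omega

theorem delta_one_one_nonincreasing (m : ℕ) (hm : 3 ≤ m) :
    delta 1 1 (m + 1) ≤ delta 1 1 m := by
  by_cases hm3 : m = 3
  · subst hm3
    unfold delta
    rw [show Llcm 1 4 = 6 from by decide, show Llcm 1 3 = 2 from by decide,
      show ((Finset.Icc 1 6).filter
        (fun x => ((Finset.Ioo 1 4).filter (fun d => d ∣ x)).card = 1)).card = 3 from by decide,
      show ((Finset.Icc 1 2).filter
        (fun x => ((Finset.Ioo 1 3).filter (fun d => d ∣ x)).card = 1)).card = 1 from by decide]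
    norm_num
  by_cases hm5 : m = 5
  · subst hm5
    unfold delta
    rw [show Llcm 1 6 = 60 from by decide, show Llcm 1 5 = 12 from by decide,
      show ((Finset.Icc 1 60).filter
        (fun x => ((Finset.Ioo 1 6).filter (fun d => d ∣ x)).card = 1)).card = 20 from by decide,
      show ((Finset.Icc 1 12).filter
        (fun x => ((Finset.Ioo 1 5).filter (fun d => d ∣ x)).card = 1)).card = 4 from by decide]
    norm_num
  -- general case
  set L := Llcm 1 m with hLdef
  set L' := Llcm 1 (m + 1) with hL'def
  have hdL : ∀ d ∈ Finset.Ioo 1 m, d ∣ L := fun d hd => Finset.dvd_lcm hd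
  have hdL' : ∀ d ∈ Finset.Ioo 1 (m + 1), d ∣ L' := fun d hd => Finset.dvd_lcm hd
  have hLL' : L ∣ L' := Finset.lcm_dvd (fun d hd => by
    simp only [Finset.mem_Ioo] at hd
    exact hdL' d (by simp only [Finset.mem_Ioo]; omega))
  have hLpos : 0 < L := by
    rcases Nat.eq_zero_or_pos L with h | h
    · exfalso
      have h0 : (Finset.Ioo 1 m).lcm id = 0 := h
      rw [Finset.lcm_eq_zero_iff] at h0
      simp only [Set.mem_image, Finset.mem_coe, Finset.mem_Ioo, id_eq] at h0
      obtain ⟨d, ⟨hd1, _⟩, hd0⟩ := h0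
      omega
    · exact h
  have hL'pos : 0 < L' := by
    rcases Nat.eq_zero_or_pos L' with h | h
    · exfalso
      have h0 : (Finset.Ioo 1 (m + 1)).lcm id = 0 := h
      rw [Finset.lcm_eq_zero_iff] at h0
      simp only [Set.mem_image, Finset.mem_coe, Finset.mem_Ioo, id_eq] at h0
      obtain ⟨d, ⟨hd1, _⟩, hd0⟩ := h0
      omega
    · exact h
  obtain ⟨k, hk⟩ := hLL'
  have hkpos : 0 < k := by
    rcases Nat.eq_zero_or_pos k with h | h
    · subst h; omega
    · exact h
  -- periodicity of the exactly-one predicate for (1, m)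
  have hper : ∀ x, ((Finset.Ioo 1 m).filter (fun d => d ∣ x + L)).card = 1 ↔
      ((Finset.Ioo 1 m).filter (fun d => d ∣ x)).card = 1 := by
    intro x
    rw [filter_dvd_shift m L x hdL]
  have hcount : ((Finset.Icc 1 L').filter
        (fun x => ((Finset.Ioo 1 m).filter (fun d => d ∣ x)).card = 1)).card =
      k * ((Finset.Icc 1 L).filter
        (fun x => ((Finset.Ioo 1 m).filter (fun d => d ∣ x)).card = 1)).card := by
    rw [hk, mul_comm L k]
    exact count_periodic _ L hper k
  -- key counting inequality over [1, L']
  have key : ((Finset.Icc 1 L').filter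
        (fun x => ((Finset.Ioo 1 (m + 1)).filter (fun d => d ∣ x)).card = 1)).card ≤
      ((Finset.Icc 1 L').filter
        (fun x => ((Finset.Ioo 1 m).filter (fun d => d ∣ x)).card = 1)).card := by
    have hins : Finset.Ioo 1 (m + 1) = insert m (Finset.Ioo 1 m) := by
      ext d; simp only [Finset.mem_Ioo, Finset.mem_insert]; omega
    have hmnot : m ∉ Finset.Ioo 1 m := by simp
    -- split by divisibility by m
    have hsplit : ∀ (Q : ℕ → Prop) [DecidablePred Q],
        ((Finset.Icc 1 L').filter Q).card =
          ((Finset.Icc 1 L').filter (fun x => Q x ∧ m ∣ x)).card +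
          ((Finset.Icc 1 L').filter (fun x => Q x ∧ ¬ m ∣ x)).card := by
      intro Q _
      rw [← Finset.filter_filter, ← Finset.filter_filter,
        Finset.card_filter_add_card_filter_not]
    rw [hsplit (fun x => ((Finset.Ioo 1 (m + 1)).filter (fun d => d ∣ x)).card = 1),
      hsplit (fun x => ((Finset.Ioo 1 m).filter (fun d => d ∣ x)).card = 1)]
    have heq2 : ((Finset.Icc 1 L').filter
          (fun x => ((Finset.Ioo 1 (m + 1)).filter (fun d => d ∣ x)).card = 1 ∧ ¬ m ∣ x)) =
        ((Finset.Icc 1 L').filter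
          (fun x => ((Finset.Ioo 1 m).filter (fun d => d ∣ x)).card = 1 ∧ ¬ m ∣ x)) := by
      apply Finset.filter_congr
      intro x _
      constructor
      · rintro ⟨h1, h2⟩
        refine ⟨?_, h2⟩
        rwa [hins, Finset.filter_insert, if_neg h2] at h1
      · rintro ⟨h1, h2⟩
        refine ⟨?_, h2⟩
        rwa [hins, Finset.filter_insert, if_neg h2]
    rw [heq2]
    -- reduce to the multiples of m
    have hfirst : ((Finset.Icc 1 L').filter
          (fun x => ((Finset.Ioo 1 (m + 1)).filter (fun d => d ∣ x)).card = 1 ∧ m ∣ x)).card ≤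
        ((Finset.Icc 1 L').filter
          (fun x => ((Finset.Ioo 1 m).filter (fun d => d ∣ x)).card = 1 ∧ m ∣ x)).card := by
      have hzero : ∀ x, m ∣ x →
          (((Finset.Ioo 1 (m + 1)).filter (fun d => d ∣ x)).card = 1 ↔
            ((Finset.Ioo 1 m).filter (fun d => d ∣ x)).card = 0) := by
        intro x hmx
        rw [hins, Finset.filter_insert, if_pos hmx,
          Finset.card_insert_of_notMem (fun h => hmnot (Finset.filter_subset _ _ h))]
        omega
      have heq1 : ((Finset.Icc 1 L').filter
            (fun x => ((Finset.Ioo 1 (m + 1)).filter (fun d => d ∣ x)).card = 1 ∧ m ∣ x)) =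
          ((Finset.Icc 1 L').filter
            (fun x => ((Finset.Ioo 1 m).filter (fun d => d ∣ x)).card = 0 ∧ m ∣ x)) := by
        apply Finset.filter_congr
        intro x _
        constructor
        · rintro ⟨h1, h2⟩; exact ⟨(hzero x h2).mp h1, h2⟩
        · rintro ⟨h1, h2⟩; exact ⟨(hzero x h2).mpr h1, h2⟩
      rw [heq1]
      by_cases hprime : m.Prime
      · -- m prime: pull the factor m out via x = m * u
        have hmL : ¬ m ∣ L := by
          intro h
          obtain ⟨d, hd, hmd⟩ := prime_dvd_lcm hprime h
          simp only [Finset.mem_Ioo] at hd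
          have : m ≤ d := Nat.le_of_dvd (by omega) hmd
          omega
        have hL'eq : L' = m * L := by
          apply Nat.dvd_antisymm
          · apply Finset.lcm_dvd
            intro d hd
            simp only [Finset.mem_Ioo] at hd
            rcases Nat.lt_or_ge d m with h | h
            · exact (hdL d (by simp only [Finset.mem_Ioo]; omega)).trans (dvd_mul_left _ _)
            · have : d = m := by omega
              subst this
              exact dvd_mul_right _ _
          · have hco : Nat.Coprime m L := (hprime.coprime_iff_not_dvd).mpr hmL
            exact Nat.Coprime.mul_dvd_of_dvd_of_dvd hco
              (hdL' m (by simp only [Finset.mem_Ioo]; omega)) ⟨k, hk⟩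
        -- transfer the filter along x = m * u
        have htrans : ∀ u : ℕ, (Finset.Ioo 1 m).filter (fun d => d ∣ m * u) =
            (Finset.Ioo 1 m).filter (fun d => d ∣ u) := by
          intro u
          apply Finset.filter_congr
          intro d hd
          simp only [Finset.mem_Ioo] at hd
          have hco : Nat.Coprime d m := by
            have : ¬ m ∣ d := fun h => by
              have := Nat.le_of_dvd (by omega) h; omega
            exact ((hprime.coprime_iff_not_dvd).mpr this).symm
          exact ⟨fun h => hco.dvd_mul_left.mp h, fun h => Dvd.dvd.mul_left h m⟩
        have hbij : ∀ (r : ℕ), ((Finset.Icc 1 L').filter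
              (fun x => ((Finset.Ioo 1 m).filter (fun d => d ∣ x)).card = r ∧ m ∣ x)).card =
            ((Finset.Icc 1 L).filter
              (fun u => ((Finset.Ioo 1 m).filter (fun d => d ∣ u)).card = r)).card := by
          intro r
          apply Finset.card_nbij' (i := fun x => x / m) (j := fun u => m * u)
          · intro x hx
            simp only [Finset.mem_coe, Finset.mem_filter, Finset.mem_Icc] at hx ⊢
            obtain ⟨⟨hx1, hx2⟩, hcard, hmx⟩ := hx
            obtain ⟨u, rfl⟩ := hmx
            rw [Nat.mul_div_cancel_left _ hprime.pos]
            rw [htrans] at hcard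
            refine ⟨⟨?_, ?_⟩, hcard⟩
            · rcases Nat.eq_zero_or_pos u with h | h
              · subst h; simp at hx1
              · exact h
            · rw [hL'eq] at hx2
              exact Nat.le_of_mul_le_mul_left hx2 hprime.pos
          · intro u hu
            simp only [Finset.mem_coe, Finset.mem_filter, Finset.mem_Icc] at hu ⊢
            obtain ⟨⟨hu1, hu2⟩, hcard⟩ := hu
            refine ⟨⟨?_, ?_⟩, ?_, dvd_mul_right m u⟩
            · have := hprime.pos; nlinarith
            · rw [hL'eq]; exact Nat.mul_le_mul_left _ hu2
            · rw [htrans]; exact hcard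
          · intro x hx
            simp only [Finset.mem_coe, Finset.mem_filter, Finset.mem_Icc] at hx
            exact Nat.mul_div_cancel' hx.2.2
          · intro u hu
            exact Nat.mul_div_cancel_left _ hprime.pos
        rw [hbij 0, hbij 1]
        -- m prime, m ≥ 3, m ≠ 3, m ≠ 5 ⇒ m > 5
        have hm7 : 5 < m := by
          rcases Nat.lt_or_ge m 6 with h | h
          · interval_cases m
            · omega
            · exact absurd hprime (by norm_num)
            · omega
          · omega
        exact core_ineq m hprime hm7
      · -- m composite: no x with m ∣ x has zero divisors in (1, m)
        have hm4 : 2 ≤ m := by omega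
        obtain ⟨d, hdm, hd2, hdlt⟩ := Nat.exists_dvd_of_not_prime2 hm4 hprime
        have hempty : ((Finset.Icc 1 L').filter
            (fun x => ((Finset.Ioo 1 m).filter (fun d => d ∣ x)).card = 0 ∧ m ∣ x)) = ∅ := by
          rw [Finset.filter_eq_empty_iff]
          rintro x hx ⟨h1, h2⟩
          have hdx : d ∣ x := hdm.trans h2
          have : d ∈ (Finset.Ioo 1 m).filter (fun e => e ∣ x) :=
            Finset.mem_filter.mpr ⟨by simp only [Finset.mem_Ioo]; omega, hdx⟩
          rw [Finset.card_eq_zero] at h1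
          rw [h1] at this
          simp at this
        rw [hempty]
        simp
    omega
  -- conclude with rational arithmetic
  unfold delta
  rw [← hLdef, ← hL'def]
  rw [div_le_div_iff₀ (by exact_mod_cast hL'pos) (by exact_mod_cast hLpos)]
  have hfinal : (((Finset.Icc 1 L').filter
      (fun x => ((Finset.Ioo 1 (m + 1)).filter (fun d => d ∣ x)).card = 1)).card) * L ≤
      (((Finset.Icc 1 L).filter
      (fun x => ((Finset.Ioo 1 m).filter (fun d => d ∣ x)).card = 1)).card) * L' := by
    calc _ ≤ ((Finset.Icc 1 L').filter
          (fun x => ((Finset.Ioo 1 m).filter (fun d => d ∣ x)).card = 1)).card * L :=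
        Nat.mul_le_mul_right _ key
      _ = _ := by rw [hcount, hk]; ring
  exact_mod_cast hfinal
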